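/- For every tuple of indices (i₀, …, iₙ) ∈ {0, …, m}^{n+1}, the following identity holds in Ω_m: Σ_{i=0}^{m} ω_{i, i₀, …, iₙ} = (n+1)! · dx_{i₀} ∧ dx_{i₁} ∧ ⋯ ∧ dx_{iₙ}, where for any tuple (j₀, …, j_q) one sets ω_{j₀, …, j_q} := q! Σ_{k=0}^{q} (−1)^k x_{j_k} dx_{j₀} ∧ ⋯ ∧ (omit dx_{j_k}) ∧ ⋯ ∧ dx_{j_q}. -/

import Mathlib

noncomputable section

/-- The DG-algebra of polynomial differential forms on the standard
`m`-simplex, modelled as the exterior algebra over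
`R = MvPolynomial (Fin m) K` of the free module `R^m`. -/
abbrev Omega (K : Type) [Field K] (m : ℕ) :=
  ExteriorAlgebra (MvPolynomial (Fin m) K) (Fin m → MvPolynomial (Fin m) K)

/-- The coordinates `x₀, x₁, …, x_m`, where `x₁, …, x_m` are the polynomial
variables and `x₀ := 1 - (x₁ + ⋯ + x_m)`. -/
def xC (K : Type) [Field K] (m : ℕ) : Fin (m + 1) → MvPolynomial (Fin m) K :=
  Fin.cases (1 - ∑ i : Fin m, MvPolynomial.X i) (fun i => MvPolynomial.X i)

/-- The vectors of `R^m` representing `dx₀, dx₁, …, dx_m`: the standard basis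
vectors for `dx₁, …, dx_m`, and `-(dx₁ + ⋯ + dx_m)` for `dx₀`. -/
def vDX (K : Type) [Field K] (m : ℕ) :
    Fin (m + 1) → (Fin m → MvPolynomial (Fin m) K) :=
  Fin.cases (-∑ i : Fin m, Pi.single i 1) (fun i => Pi.single i 1)

/-- The one-forms `dx₀, dx₁, …, dx_m` in `Ω_m` (degree `1` elements of the
exterior algebra). -/
def dX (K : Type) [Field K] (m : ℕ) (j : Fin (m + 1)) : Omega K m :=
  ExteriorAlgebra.ι (MvPolynomial (Fin m) K) (vDX K m j)

/-- The Whitney elementary form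
`ω_f = n! Σᵢ (-1)ⁱ x_{f i} dx_{f 0} ∧ ⋯ ∧ (omit dx_{f i}) ∧ ⋯ ∧ dx_{f n}`
associated to a map `f : [n] → [m]`. -/
def omegaF (K : Type) [Field K] {n m : ℕ} (f : Fin (n + 1) → Fin (m + 1)) :
    Omega K m :=
  (n.factorial : MvPolynomial (Fin m) K) •
    ∑ i : Fin (n + 1),
      (-1 : MvPolynomial (Fin m) K) ^ (i : ℕ) •
        (algebraMap (MvPolynomial (Fin m) K) (Omega K m) (xC K m (f i)) *
          ((List.ofFn fun j : Fin (n + 1) => dX K m (f j)).eraseIdx (i : ℕ)).prod)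

/-- On polynomials, the pullback along `g : [n] → [m]` substitutes
`x_j ↦ Σ_{i ∈ [n], g i = j} x_i`. -/
def pullbackPoly (K : Type) [Field K] {n m : ℕ}
    (g : Fin (n + 1) → Fin (m + 1)) :
    MvPolynomial (Fin m) K →ₐ[K] MvPolynomial (Fin n) K :=
  MvPolynomial.aeval fun i : Fin m =>
    ∑ j ∈ Finset.univ.filter (fun j : Fin (n + 1) => g j = i.succ), xC K n j

/-- On one-forms, the pullback along `g : [n] → [m]` sends
`dx_j ↦ Σ_{i ∈ [n], g i = j} dx_i`; this is the corresponding vector. -/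
def pullbackVec (K : Type) [Field K] {n m : ℕ}
    (g : Fin (n + 1) → Fin (m + 1)) (i : Fin m) :
    Fin n → MvPolynomial (Fin n) K :=
  ∑ j ∈ Finset.univ.filter (fun j : Fin (n + 1) => g j = i.succ), vDX K n j

/-- The pullback `g* : Ω_m → Ω_n` along a map `g : [n] → [m]`: the (unique)
`K`-algebra homomorphism determined by `x_j ↦ Σ_{i ∈ [n], g i = j} x_i` and
`dx_j ↦ Σ_{i ∈ [n], g i = j} dx_i` for every `j ∈ [m]`. -/
def pullback (K : Type) [Field K] {n m : ℕ}
    (g : Fin (n + 1) → Fin (m + 1)) : Omega K m → Omega K n :=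
  letI φ : MvPolynomial (Fin m) K →+* Omega K n :=
    (algebraMap (MvPolynomial (Fin n) K) (Omega K n)).comp
      (pullbackPoly K g).toRingHom
  letI hcomm : ∀ (c : MvPolynomial (Fin m) K) (x : Omega K n),
      φ c * x = x * φ c := fun c x => Algebra.commutes (pullbackPoly K g c) x
  letI : Algebra (MvPolynomial (Fin m) K) (Omega K n) := φ.toAlgebra' hcomm
  letI L : (Fin m → MvPolynomial (Fin m) K) →ₗ[MvPolynomial (Fin m) K]
      Omega K n :=
    { toFun := fun v =>
        ExteriorAlgebra.ι (MvPolynomial (Fin n) K)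
          (∑ i : Fin m, pullbackPoly K g (v i) • pullbackVec K g i)
      map_add' := by
        intro u v
        show ExteriorAlgebra.ι (MvPolynomial (Fin n) K)
            (∑ i : Fin m, pullbackPoly K g ((u + v) i) • pullbackVec K g i) =
          ExteriorAlgebra.ι (MvPolynomial (Fin n) K)
              (∑ i : Fin m, pullbackPoly K g (u i) • pullbackVec K g i) +
            ExteriorAlgebra.ι (MvPolynomial (Fin n) K)
              (∑ i : Fin m, pullbackPoly K g (v i) • pullbackVec K g i)
        rw [← map_add, ← Finset.sum_add_distrib]
        exact congrArg _ (Finset.sum_congr rfl fun i _ => by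
          simp [Pi.add_apply, map_add, add_smul])
      map_smul' := by
        intro c v
        show ExteriorAlgebra.ι (MvPolynomial (Fin n) K)
            (∑ i : Fin m, pullbackPoly K g ((c • v) i) • pullbackVec K g i) =
          algebraMap (MvPolynomial (Fin n) K) (Omega K n)
              (pullbackPoly K g c) *
            ExteriorAlgebra.ι (MvPolynomial (Fin n) K)
              (∑ i : Fin m, pullbackPoly K g (v i) • pullbackVec K g i)
        rw [← Algebra.smul_def, ← map_smul, Finset.smul_sum]
        exact congrArg _ (Finset.sum_congr rfl fun i _ => by
          simp [Pi.smul_apply, smul_eq_mul, map_mul, smul_smul]) }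
  (ExteriorAlgebra.lift (MvPolynomial (Fin m) K)
    ⟨L, fun v => ExteriorAlgebra.ι_sq_zero _⟩ :
      Omega K m →ₐ[MvPolynomial (Fin m) K] Omega K n)

lemma sum_xC (K : Type) [Field K] (m : ℕ) :
    ∑ i : Fin (m + 1), xC K m i = 1 := by
  rw [Fin.sum_univ_succ]
  simp [xC]

lemma sum_vDX (K : Type) [Field K] (m : ℕ) :
    ∑ i : Fin (m + 1), vDX K m i = 0 := by
  rw [Fin.sum_univ_succ]
  simp [vDX]

set_option synthInstance.maxHeartbeats 1000000 in
lemma sum_dX (K : Type) [Field K] (m : ℕ) :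
    ∑ i : Fin (m + 1), dX K m i = 0 := by
  simp only [dX, ← map_sum, sum_vDX, map_zero]

set_option synthInstance.maxHeartbeats 1000000 in
set_option maxHeartbeats 2000000 in
/-- For every tuple of indices `(i₀, …, iₙ)` in `{0, …, m}`, one has
`Σ_{i=0}^{m} ω_{i, i₀, …, iₙ} = (n+1)! ⬝ dx_{i₀} ∧ ⋯ ∧ dx_{iₙ}` in `Ω_m`,
where `ω_{j₀,…,j_q} = q! Σ_k (-1)^k x_{j_k} dx_{j₀} ∧ ⋯ (omit dx_{j_k}) ⋯ ∧ dx_{j_q}`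
(i.e. `ω_v = omegaF v` for an arbitrary tuple `v`). -/
theorem stmt11 (K : Type) [Field K] [CharZero K] (n m : ℕ)
    (v : Fin (n + 1) → Fin (m + 1)) :
    ∑ i : Fin (m + 1), omegaF K (Fin.cons i v : Fin (n + 2) → Fin (m + 1)) =
      ((n + 1).factorial : MvPolynomial (Fin m) K) •
        (List.ofFn fun j : Fin (n + 1) => dX K m (v j)).prod := by
  classical
  set R := MvPolynomial (Fin m) K
  set L := List.ofFn fun j : Fin (n + 1) => dX K m (v j) with hLdef
  have hL : ∀ i : Fin (m + 1),
      (List.ofFn fun j : Fin (n + 2) => dX K m ((Fin.cons i v : Fin (n + 2) → Fin (m + 1)) j)) =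
        dX K m i :: L := by
    intro i
    rw [List.ofFn_succ]
    rfl
  have key : ∀ i : Fin (m + 1),
      omegaF K (Fin.cons i v : Fin (n + 2) → Fin (m + 1)) =
      ((n + 1).factorial : R) •
        (algebraMap R (Omega K m) (xC K m i) * L.prod
          + ∑ j : Fin (n + 1), (-1 : R) ^ (j : ℕ) •
              -(algebraMap R (Omega K m) (xC K m (v j)) *
                (dX K m i * (L.eraseIdx (j : ℕ)).prod))) := by
    intro i
    rw [omegaF]
    congr 1
    rw [Fin.sum_univ_succ]
    congr 1
    · rw [hL i]
      simp only [Fin.val_zero, pow_zero, one_smul, List.eraseIdx_cons_zero,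
        Fin.cons_zero]
      rfl
    · apply Finset.sum_congr rfl
      intro j _
      rw [hL i]
      have : ((j : Fin (n+1)).succ : ℕ) = (j : ℕ) + 1 := rfl
      rw [this]
      simp only [List.eraseIdx_cons_succ, List.prod_cons, Fin.cons_succ,
        pow_succ]
      rw [mul_smul]
      congr 1
  rw [Finset.sum_congr rfl fun i _ => key i, ← Finset.smul_sum]
  congr 1
  rw [Finset.sum_add_distrib]
  have h1 : ∑ i : Fin (m + 1),
      algebraMap R (Omega K m) (xC K m i) * L.prod = L.prod := by
    rw [← Finset.sum_mul, ← map_sum, sum_xC, map_one, one_mul]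
  have h2 : ∑ i : Fin (m + 1), ∑ j : Fin (n + 1), (-1 : R) ^ (j : ℕ) •
      -(algebraMap R (Omega K m) (xC K m (v j)) *
        (dX K m i * (L.eraseIdx (j : ℕ)).prod)) = 0 := by
    rw [Finset.sum_comm]
    apply Finset.sum_eq_zero
    intro j _
    rw [← Finset.smul_sum]
    have : ∑ i : Fin (m + 1),
        -(algebraMap R (Omega K m) (xC K m (v j)) *
          (dX K m i * (L.eraseIdx (j : ℕ)).prod)) = 0 := by
      rw [Finset.sum_neg_distrib, ← Finset.mul_sum, ← Finset.sum_mul,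
        sum_dX, zero_mul, mul_zero, neg_zero]
    rw [this, smul_zero]
  rw [h1, h2, add_zero]

end
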